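/- For d = 1, identifying one-column tableaux of shape 1^k with k-subsets of [n], the cyclic Demazure crystal B_f(ω_k) equals the positroid M(f) = ⋂_{a=1}^n χ^{a-1}(M_{χ^{1-a}(I_a)}), where M_I = { J : J ≥ I in the componentwise (Gale/Bruhat) order } is the Schubert matroid. -/

import Mathlib

/-- `T` is a semistandard Young tableau of rectangular shape with `k` rows and `d`
columns, with entries in `{1,…,n}`: rows weakly increase, columns strictly increase.
(The values of `T` outside the rectangle are irrelevant.) -/
def IsSSYT (k d n : ℕ) (T : ℕ → ℕ → ℕ) : Prop :=
  (∀ r c, r < k → c < d → 1 ≤ T r c ∧ T r c ≤ n) ∧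
  (∀ r c, r < k → c + 1 < d → T r c ≤ T r (c + 1)) ∧
  (∀ r c, r + 1 < k → c < d → T r c < T (r + 1) c)

/-- A cell `(r,c)` of a tableau with `k` rows is *free* for the Bender–Knuth toggle `t_i`:
an entry `i` is free if the cell directly below does not contain `i+1`, and an entry
`i+1` is free if the cell directly above does not contain `i`. -/
def bkFree (k i : ℕ) (T : ℕ → ℕ → ℕ) (r c : ℕ) : Prop :=
  (T r c = i ∧ (r + 1 = k ∨ T (r + 1) c ≠ i + 1)) ∨
  (T r c = i + 1 ∧ (r = 0 ∨ T (r - 1) c ≠ i))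

open Classical in
/-- The Bender–Knuth involution `t_i` on (the rectangle `k × d` of) a tableau: in each
row, if the free entries consist of `a` letters `i` followed by `b` letters `i+1`,
replace them by `b` letters `i` followed by `a` letters `i+1`. -/
noncomputable def bk (k d i : ℕ) (T : ℕ → ℕ → ℕ) : ℕ → ℕ → ℕ := fun r c =>
  let F := (Finset.range d).filter fun c' => bkFree k i T r c'
  if c ∈ F then
    if (F.filter fun c' => c' < c).card < (F.filter fun c' => T r c' = i + 1).card
    then i else i + 1
  else T r c

/-- Promotion `χ` on semistandard tableaux with entries in `{1,…,n}`, computed as the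
composite of Bender–Knuth involutions `t_1 ∘ t_2 ∘ ⋯ ∘ t_{n-1}`.  This is the standard
equivalent description of jeu-de-taquin promotion (delete the `n`'s, slide the remaining
entries to the bottom right, add one to every entry, fill the vacated boxes with `1`'s). -/
noncomputable def promo (k d n : ℕ) (T : ℕ → ℕ → ℕ) : ℕ → ℕ → ℕ :=
  (((List.range (n - 1)).map (· + 1)).foldr (fun i acc => bk k d i acc) T)

/-- A `(k,n)`-bounded affine permutation: a bijection `f : ℤ → ℤ` with
`f(i+n) = f(i) + n`, `∑_{i=1}^n f(i) = C(n+1,2) + kn`, and `i ≤ f(i) ≤ i + n`. -/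
def IsBAP (k n : ℕ) (f : ℤ → ℤ) : Prop :=
  Function.Bijective f ∧ (∀ i, f (i + n) = f i + n) ∧
  (∑ i ∈ Finset.Icc (1 : ℤ) (n : ℤ), f i) = ((n + 1).choose 2 : ℤ) + (k : ℤ) * n ∧
  ∀ i, i ≤ f i ∧ f i ≤ i + n

/-- The representative in `{1,…,n}` of an integer modulo `n`. -/
def res (n : ℕ) (x : ℤ) : ℕ := ((x - 1) % (n : ℤ) + 1).toNat

/-- The Grassmann necklace of `f`: `I_a = { f(b) mod n : b < a, f(b) ≥ a }` with
representatives taken in `{1,…,n}` (only `b ∈ [a-n, a-1]` can contribute, by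
boundedness). -/
noncomputable def necklaceOf (n : ℕ) (f : ℤ → ℤ) : ℕ → Finset ℕ := fun a =>
  ((Finset.Icc ((a : ℤ) - n) ((a : ℤ) - 1)).filter fun b => (a : ℤ) ≤ f b).image
    fun b => res n (f b)

/-- Normalization of a tableau: set all values outside the `k × d` rectangle to `0`. -/
def normTab (k d : ℕ) (T : ℕ → ℕ → ℕ) : ℕ → ℕ → ℕ := fun r c =>
  if r < k ∧ c < d then T r c else 0

/-- Promotion followed by normalization outside the rectangle. -/
noncomputable def promoN (k d n : ℕ) : (ℕ → ℕ → ℕ) → (ℕ → ℕ → ℕ) := fun T =>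
  normTab k d (promo k d n T)

/-- The cyclic rotation `χ` on subsets of `{1,…,n}`: add `1` mod `n` to each element. -/
def shiftSet (n : ℕ) (S : Finset ℕ) : Finset ℕ := S.image fun x => x % n + 1

/-- The tableau `T_I` of shape `d^k` whose `r`-th row is filled with the `r`-th smallest
element of `I` (normalized to `0` outside the rectangle). -/
def tabOf (k d : ℕ) (I : Finset ℕ) : ℕ → ℕ → ℕ := fun r c =>
  if r < k ∧ c < d then (I.sort (· ≤ ·)).getD r 0 else 0

/-- The Demazure crystal `B_I(dω_k)`: normalized semistandard tableaux of shape `d^k`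
with entries in `{1,…,n}` which are entry-wise `≥ T_I`. -/
def BIset (k d n : ℕ) (I : Finset ℕ) : Set (ℕ → ℕ → ℕ) :=
  {T | IsSSYT k d n T ∧ (∀ r c, r < k → c < d → tabOf k d I r c ≤ T r c) ∧
    ∀ r c, ¬(r < k ∧ c < d) → T r c = 0}

/-- The cyclic Demazure crystal
`B_f(dω_k) = ⋂_{a=1}^n χ^{a-1}(B_{χ^{1-a}(I_a)}(dω_k))`, where `(I_1,…,I_n)` is the
Grassmann necklace of `f`, `χ` acts on tableaux by promotion and on subsets by cyclic
rotation (and `χ^{1-a} = χ^{n+1-a}`). -/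
noncomputable def cyclicDemazure (k d n : ℕ) (f : ℤ → ℤ) : Set (ℕ → ℕ → ℕ) :=
  ⋂ a ∈ Finset.Icc 1 n, (promoN k d n)^[a - 1] ''
    BIset k d n ((shiftSet n)^[n + 1 - a] (necklaceOf n f a))

/-- Componentwise (Gale) order on `k`-subsets: the `r`-th smallest element of `I` is at
most the `r`-th smallest element of `J` for all `r < k`. -/
def GaleLe (k : ℕ) (I J : Finset ℕ) : Prop :=
  ∀ r, r < k → (I.sort (· ≤ ·)).getD r 0 ≤ (J.sort (· ≤ ·)).getD r 0

/-- The Schubert matroid `M_I = { J : J ≥ I componentwise }` on `k`-subsets of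
`{1,…,n}`. -/
def SchubMatroid (k n : ℕ) (I : Finset ℕ) : Set (Finset ℕ) :=
  {J | J ⊆ Finset.Icc 1 n ∧ J.card = k ∧ GaleLe k I J}

/-- The positroid `M(f) = ⋂_{a=1}^n χ^{a-1}(M_{χ^{1-a}(I_a)})` of a bounded affine
permutation `f` with Grassmann necklace `(I_1,…,I_n)`. -/
def posOf (k n : ℕ) (f : ℤ → ℤ) : Set (Finset ℕ) :=
  ⋂ a ∈ Finset.Icc 1 n, (shiftSet n)^[a - 1] ''
    SchubMatroid k n ((shiftSet n)^[n + 1 - a] (necklaceOf n f a))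

namespace Stmt11Aux

/-- the r-th smallest element (0 outside range) -/
def col (S : Finset ℕ) (r : ℕ) : ℕ := (S.sort (· ≤ ·)).getD r 0

lemma sort_unique {S : Finset ℕ} {l : List ℕ} (h1 : l.Pairwise (· < ·)) (h2 : l.toFinset = S) :
    S.sort (· ≤ ·) = l :=
  List.Perm.eq_of_pairwise' (S.pairwise_sort _) (h1.imp le_of_lt)
    (List.perm_of_nodup_nodup_toFinset_eq (S.sort_nodup _) h1.nodup
      (by rw [Finset.sort_toFinset, h2]))

variable {k : ℕ} {S : Finset ℕ}

lemma col_eq_get (h : S.card = k) {r : ℕ} (hr : r < k) :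
    col S r = (S.sort (· ≤ ·)).get ⟨r, by rw [Finset.length_sort, h]; exact hr⟩ :=
  List.getD_eq_get _ _ ⟨r, by rw [Finset.length_sort, h]; exact hr⟩

lemma col_mem (h : S.card = k) {r : ℕ} (hr : r < k) : col S r ∈ S := by
  rw [col_eq_get h hr, ← Finset.mem_sort (· ≤ ·)]
  exact List.get_mem _ _

lemma col_lt_col (h : S.card = k) {r r' : ℕ} (hr : r < r') (hr' : r' < k) :
    col S r < col S r' := by
  rw [col_eq_get h (hr.trans hr'), col_eq_get h hr']
  exact List.pairwise_iff_get.mp ((Finset.sortedLT_sort S).pairwise) _ _ hr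

lemma col_exists (h : S.card = k) {x : ℕ} (hx : x ∈ S) : ∃ r, r < k ∧ col S r = x := by
  rw [← Finset.mem_sort (· ≤ ·) (s := S), List.mem_iff_get] at hx
  obtain ⟨⟨r, hr⟩, hget⟩ := hx
  rw [Finset.length_sort, h] at hr
  exact ⟨r, hr, by rw [col_eq_get h hr]; exact hget⟩

lemma col_succ (h : S.card = k) {r i : ℕ} (hr : r < k) (hcol : col S r = i) (hi1 : i + 1 ∈ S) :
    r + 1 < k ∧ col S (r + 1) = i + 1 := by
  obtain ⟨r1, hr1, hc1⟩ := col_exists h hi1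
  have hrr : r < r1 := by
    rcases lt_trichotomy r r1 with h' | h' | h'
    · exact h'
    · subst h'; omega
    · have := col_lt_col h h' hr; omega
  have h2 : r + 1 < k := by omega
  refine ⟨h2, ?_⟩
  by_cases he : r + 1 = r1
  · rw [he, hc1]
  · have a := col_lt_col h (show r + 1 < r1 by omega) hr1
    have b := col_lt_col h (show r < r + 1 by omega) h2
    omega

lemma col_pred (h : S.card = k) {r i : ℕ} (hr : r < k) (hcol : col S r = i + 1) (hi : i ∈ S) :
    1 ≤ r ∧ col S (r - 1) = i := by
  obtain ⟨r0, hr0, hc0⟩ := col_exists h hi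
  have hrr : r0 < r := by
    rcases lt_trichotomy r0 r with h' | h' | h'
    · exact h'
    · subst h'; omega
    · have := col_lt_col h h' hr0; omega
  refine ⟨by omega, ?_⟩
  by_cases he : r - 1 = r0
  · rw [he, hc0]
  · have a := col_lt_col h (show r0 < r - 1 by omega) (by omega)
    have b := col_lt_col h (show r - 1 < r by omega) hr
    omega

open Classical in
lemma bk_eval (k i : ℕ) (T : ℕ → ℕ → ℕ) (r c : ℕ) :
    bk k 1 i T r c =
      if c = 0 ∧ bkFree k i T r 0 then (if T r 0 = i + 1 then i else i + 1) else T r c := by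
  unfold bk
  simp only [Finset.range_one, Finset.filter_singleton]
  by_cases hfree : bkFree k i T r 0
  · simp only [if_pos hfree, Finset.mem_singleton]
    by_cases hc : c = 0
    · subst hc
      rw [if_pos (rfl : (0:ℕ) = 0)]
      rw [if_pos (⟨rfl, hfree⟩ : (0:ℕ) = 0 ∧ bkFree k i T r 0)]
      by_cases hv : T r 0 = i + 1
      · simp [Finset.filter_singleton, hv]
      · simp [Finset.filter_singleton, hv]
    · rw [if_neg hc, if_neg (fun h => hc h.1)]
  · rw [if_neg hfree]
    rw [if_neg (Finset.notMem_empty c), if_neg (fun h : _ ∧ _ => hfree h.2)]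

lemma tabOf_eval (k : ℕ) (S : Finset ℕ) (r c : ℕ) :
    tabOf k 1 S r c = if r < k ∧ c = 0 then col S r else 0 := by
  unfold tabOf col
  by_cases h : r < k ∧ c < 1
  · rw [if_pos h, if_pos ⟨h.1, by omega⟩]
  · rw [if_neg h, if_neg (by omega)]

/-- set-level Bender-Knuth toggle -/
def sstep (i : ℕ) (S : Finset ℕ) : Finset ℕ :=
  if i ∈ S ∧ i + 1 ∉ S then insert (i + 1) (S.erase i)
  else if i + 1 ∈ S ∧ i ∉ S then insert i (S.erase (i + 1))
  else S

lemma sort_map_up {i : ℕ} (hi : i ∈ S) (hi1 : i + 1 ∉ S) :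
    (insert (i + 1) (S.erase i)).sort (· ≤ ·)
      = (S.sort (· ≤ ·)).map (fun x => if x = i then i + 1 else x) := by
  apply sort_unique
  · rw [List.pairwise_map]
    refine ((Finset.sortedLT_sort S).pairwise).imp_of_mem ?_
    intro a b ha hb hab
    rw [Finset.mem_sort] at ha hb
    have hb1 : b ≠ i + 1 := fun h => hi1 (h ▸ hb)
    split_ifs with h1 h2 h2 <;> omega
  · ext x
    simp only [List.mem_toFinset, List.mem_map, Finset.mem_sort, Finset.mem_insert,
      Finset.mem_erase]
    constructor
    · rintro ⟨y, hy, rfl⟩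
      by_cases h : y = i
      · left; rw [if_pos h]
      · right; rw [if_neg h]; exact ⟨h, hy⟩
    · rintro (rfl | ⟨hx, hxS⟩)
      · exact ⟨i, hi, by rw [if_pos rfl]⟩
      · exact ⟨x, hxS, by rw [if_neg hx]⟩

lemma sort_map_down {i : ℕ} (hi1 : i + 1 ∈ S) (hi : i ∉ S) :
    (insert i (S.erase (i + 1))).sort (· ≤ ·)
      = (S.sort (· ≤ ·)).map (fun x => if x = i + 1 then i else x) := by
  apply sort_unique
  · rw [List.pairwise_map]
    refine ((Finset.sortedLT_sort S).pairwise).imp_of_mem ?_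
    intro a b ha hb hab
    rw [Finset.mem_sort] at ha hb
    have ha1 : a ≠ i := fun h => hi (h ▸ ha)
    split_ifs with h1 h2 h2 <;> omega
  · ext x
    simp only [List.mem_toFinset, List.mem_map, Finset.mem_sort, Finset.mem_insert,
      Finset.mem_erase]
    constructor
    · rintro ⟨y, hy, rfl⟩
      by_cases h : y = i + 1
      · left; rw [if_pos h]
      · right; rw [if_neg h]; exact ⟨h, hy⟩
    · rintro (h | ⟨hx, hxS⟩)
      · exact ⟨i + 1, hi1, by rw [if_pos rfl]; exact h.symm⟩
      · exact ⟨x, hxS, by rw [if_neg hx]⟩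

lemma col_map {S' : Finset ℕ} (f : ℕ → ℕ)
    (hs : S'.sort (· ≤ ·) = (S.sort (· ≤ ·)).map f) (h : S.card = k) {r : ℕ} (hr : r < k) :
    col S' r = f (col S r) := by
  have hl : r < (S.sort (· ≤ ·)).length := by rw [Finset.length_sort, h]; exact hr
  rw [col, hs, col, List.getD_eq_getElem _ _ (by simpa using hl), List.getD_eq_getElem _ _ hl]
  simp

lemma bk_tabOf {k i : ℕ} (hi : 1 ≤ i) {S : Finset ℕ} (h : S.card = k) :
    bk k 1 i (tabOf k 1 S) = tabOf k 1 (sstep i S) := by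
  funext r c
  set T := tabOf k 1 S with hT
  have hT0 : ∀ r', T r' 0 = if r' < k then col S r' else 0 := by
    intro r'; rw [hT, tabOf_eval]; by_cases hh : r' < k <;> simp [hh]
  rw [bk_eval, tabOf_eval]
  by_cases hc : c = 0
  swap
  · rw [if_neg (show ¬(c = 0 ∧ bkFree k i T r 0) from fun hh => hc hh.1),
      if_neg (show ¬(r < k ∧ c = 0) from fun hh => hc hh.2), hT, tabOf_eval,
      if_neg (show ¬(r < k ∧ c = 0) from fun hh => hc hh.2)]
  subst hc
  by_cases hr : r < k
  swap
  · have hT00 : T r 0 = 0 := by rw [hT0]; simp [hr]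
    have hnf : ¬ bkFree k i T r 0 := by
      intro hf; unfold bkFree at hf
      rcases hf with ⟨h1, _⟩ | ⟨h1, _⟩ <;> omega
    rw [if_neg (show ¬((0:ℕ) = 0 ∧ bkFree k i T r 0) from fun hh => hnf hh.2),
      if_neg (show ¬(r < k ∧ (0:ℕ) = 0) from fun hh => hr hh.1), hT00]
  rw [if_pos (show r < k ∧ (0:ℕ) = 0 from ⟨hr, rfl⟩)]
  have hTr : T r 0 = col S r := by rw [hT0, if_pos hr]
  set v := col S r with hv
  have hvS : v ∈ S := col_mem h hr
  by_cases hA : i ∈ S ∧ i + 1 ∉ S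
  · have hss : sstep i S = insert (i + 1) (S.erase i) := by rw [sstep, if_pos hA]
    have hcol : col (sstep i S) r = if v = i then i + 1 else v := by
      rw [hss]; exact col_map _ (sort_map_up hA.1 hA.2) h hr
    rw [hcol]
    by_cases hvi : v = i
    · have hfree : bkFree k i T r 0 := by
        unfold bkFree
        left
        refine ⟨by rw [hTr, hvi], ?_⟩
        rcases Nat.lt_or_ge (r + 1) k with h1 | h1
        · right
          rw [hT0, if_pos h1]
          intro hcon
          exact hA.2 (hcon ▸ col_mem h h1)
        · left; omega
      rw [if_pos (show (0:ℕ) = 0 ∧ bkFree k i T r 0 from ⟨rfl, hfree⟩),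
        if_neg (show ¬ T r 0 = i + 1 by rw [hTr, hvi]; omega), if_pos hvi]
    · have hvi1 : v ≠ i + 1 := fun hh => hA.2 (hh ▸ hvS)
      have hnf : ¬ bkFree k i T r 0 := by
        intro hf; unfold bkFree at hf
        rcases hf with ⟨h1, _⟩ | ⟨h1, _⟩ <;> rw [hTr] at h1 <;> omega
      rw [if_neg (show ¬((0:ℕ) = 0 ∧ bkFree k i T r 0) from fun hh => hnf hh.2), hTr, if_neg hvi]
  by_cases hB : i + 1 ∈ S ∧ i ∉ S
  · have hss : sstep i S = insert i (S.erase (i + 1)) := by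
      rw [sstep, if_neg hA, if_pos hB]
    have hcol : col (sstep i S) r = if v = i + 1 then i else v := by
      rw [hss]; exact col_map _ (sort_map_down hB.1 hB.2) h hr
    rw [hcol]
    by_cases hvi : v = i + 1
    · have hfree : bkFree k i T r 0 := by
        unfold bkFree
        right
        refine ⟨by rw [hTr, hvi], ?_⟩
        rcases Nat.eq_zero_or_pos r with h1 | h1
        · left; exact h1
        · right
          rw [hT0, if_pos (show r - 1 < k by omega)]
          intro hcon
          exact hB.2 (hcon ▸ col_mem h (show r - 1 < k by omega))
      rw [if_pos (show (0:ℕ) = 0 ∧ bkFree k i T r 0 from ⟨rfl, hfree⟩),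
        if_pos (show T r 0 = i + 1 by rw [hTr, hvi]), if_pos hvi]
    · have hvi0 : v ≠ i := fun hh => hB.2 (hh ▸ hvS)
      have hnf : ¬ bkFree k i T r 0 := by
        intro hf; unfold bkFree at hf
        rcases hf with ⟨h1, _⟩ | ⟨h1, _⟩ <;> rw [hTr] at h1 <;> omega
      rw [if_neg (show ¬((0:ℕ) = 0 ∧ bkFree k i T r 0) from fun hh => hnf hh.2), hTr, if_neg hvi]
  · have hss : sstep i S = S := by rw [sstep, if_neg hA, if_neg hB]
    rw [hss]
    by_cases hvi : v = i
    · have hiS : i ∈ S := hvi ▸ hvS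
      have hi1S : i + 1 ∈ S := by by_contra hcon; exact hA ⟨hiS, hcon⟩
      obtain ⟨h1, h2⟩ := col_succ h hr hvi hi1S
      have hnf : ¬ bkFree k i T r 0 := by
        intro hf; unfold bkFree at hf
        rcases hf with ⟨_, h3 | h3⟩ | ⟨h3, _⟩
        · omega
        · exact h3 (by rw [hT0, if_pos h1, h2])
        · rw [hTr] at h3; omega
      rw [if_neg (show ¬((0:ℕ) = 0 ∧ bkFree k i T r 0) from fun hh => hnf hh.2)]
      exact hTr
    by_cases hvi1 : v = i + 1
    · have hi1S : i + 1 ∈ S := hvi1 ▸ hvS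
      have hiS : i ∈ S := by by_contra hcon; exact hB ⟨hi1S, hcon⟩
      obtain ⟨h1, h2⟩ := col_pred h hr hvi1 hiS
      have hnf : ¬ bkFree k i T r 0 := by
        intro hf; unfold bkFree at hf
        rcases hf with ⟨h3, _⟩ | ⟨_, h3 | h3⟩
        · rw [hTr] at h3; omega
        · omega
        · exact h3 (by rw [hT0, if_pos (show r - 1 < k by omega), h2])
      rw [if_neg (show ¬((0:ℕ) = 0 ∧ bkFree k i T r 0) from fun hh => hnf hh.2)]
      exact hTr
    · have hnf : ¬ bkFree k i T r 0 := by
        intro hf; unfold bkFree at hf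
        rcases hf with ⟨h3, _⟩ | ⟨h3, _⟩ <;> rw [hTr] at h3 <;> omega
      rw [if_neg (show ¬((0:ℕ) = 0 ∧ bkFree k i T r 0) from fun hh => hnf hh.2)]
      exact hTr

/-- window rotation map: identity below `n - t`, rotates `[n-t, n]` up by one. -/
def g (n t y : ℕ) : ℕ := if y < n - t then y else if y = n then n - t else y + 1

lemma g_mem {n t y : ℕ} (hy : y ∈ Finset.Icc 1 n) (ht : t < n) :
    g n t y ∈ Finset.Icc 1 n := by
  rw [Finset.mem_Icc] at *
  unfold g; split_ifs <;> omega

lemma g_injOn (n t : ℕ) : ∀ a ∈ Finset.Icc 1 n, ∀ b ∈ Finset.Icc 1 n,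
    g n t a = g n t b → a = b := by
  intro a ha b hb hab
  rw [Finset.mem_Icc] at ha hb
  unfold g at hab
  split_ifs at hab <;> omega

lemma card_image_g {n t k : ℕ} {S : Finset ℕ} (hS : S ⊆ Finset.Icc 1 n) (h : S.card = k) :
    (S.image (g n t)).card = k := by
  rw [Finset.card_image_of_injOn (fun a ha b hb => g_injOn n t a (hS ha) b (hS hb)), h]

lemma sstep_image {n t : ℕ} (ht : t + 1 < n) {S : Finset ℕ} (hS : S ⊆ Finset.Icc 1 n) :
    sstep (n - (t + 1)) (S.image (g n t)) = S.image (g n (t + 1)) := by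
  set j := n - (t + 1) with hj
  have hjn : j + 1 = n - t := by omega
  have hb : ∀ y ∈ S, 1 ≤ y ∧ y ≤ n := by
    intro y hy; exact Finset.mem_Icc.mp (hS hy)
  have hgj : g n t j = j := by unfold g; split_ifs <;> omega
  have hgn : g n t n = j + 1 := by unfold g; split_ifs <;> omega
  have hg1j : g n (t + 1) j = j + 1 := by unfold g; split_ifs <;> omega
  have hg1n : g n (t + 1) n = j := by unfold g; split_ifs <;> omega
  have hagree : ∀ y, y ≠ j → y ≠ n → g n (t + 1) y = g n t y := by
    intro y h1 h2; unfold g; split_ifs <;> omega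
  have heqj : ∀ y ∈ S, g n t y = j → y = j := by
    intro y hy hg; have := hb y hy; unfold g at hg; split_ifs at hg <;> omega
  have heqj1 : ∀ y ∈ S, g n t y = j + 1 → y = n := by
    intro y hy hg; have := hb y hy; unfold g at hg; split_ifs at hg <;> omega
  have heq1j : ∀ y ∈ S, g n (t + 1) y = j → y = n := by
    intro y hy hg; have := hb y hy; unfold g at hg; split_ifs at hg <;> omega
  have hmemj : j ∈ S.image (g n t) ↔ j ∈ S := by
    constructor
    · rintro hx
      rw [Finset.mem_image] at hx
      obtain ⟨y, hy, hgy⟩ := hx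
      rwa [← heqj y hy hgy]
    · intro hx; exact Finset.mem_image.mpr ⟨j, hx, hgj⟩
  have hmemj1 : j + 1 ∈ S.image (g n t) ↔ n ∈ S := by
    constructor
    · rintro hx
      rw [Finset.mem_image] at hx
      obtain ⟨y, hy, hgy⟩ := hx
      rwa [← heqj1 y hy hgy]
    · intro hx; exact Finset.mem_image.mpr ⟨n, hx, hgn⟩
  by_cases hjS : j ∈ S <;> by_cases hnS : n ∈ S
  · -- both: sstep is identity
    have h1 : ¬(j ∈ S.image (g n t) ∧ j + 1 ∉ S.image (g n t)) := by
      intro hh; exact hh.2 (hmemj1.mpr hnS)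
    have h2 : ¬(j + 1 ∈ S.image (g n t) ∧ j ∉ S.image (g n t)) := by
      intro hh; exact hh.2 (hmemj.mpr hjS)
    rw [sstep, if_neg h1, if_neg h2]
    ext x
    simp only [Finset.mem_image]
    constructor
    · rintro ⟨y, hy, rfl⟩
      by_cases h3 : y = j
      · exact ⟨n, hnS, by rw [hg1n, h3, hgj]⟩
      · by_cases h4 : y = n
        · exact ⟨j, hjS, by rw [hg1j, h4, hgn]⟩
        · exact ⟨y, hy, hagree y h3 h4⟩
    · rintro ⟨y, hy, rfl⟩
      by_cases h3 : y = j
      · exact ⟨n, hnS, by rw [hgn, h3, hg1j]⟩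
      · by_cases h4 : y = n
        · exact ⟨j, hjS, by rw [hgj, h4, hg1n]⟩
        · exact ⟨y, hy, (hagree y h3 h4).symm⟩
  · -- j ∈ S, n ∉ S : move j up
    have h1 : j ∈ S.image (g n t) ∧ j + 1 ∉ S.image (g n t) :=
      ⟨hmemj.mpr hjS, fun hh => hnS (hmemj1.mp hh)⟩
    rw [sstep, if_pos h1]
    ext x
    simp only [Finset.mem_insert, Finset.mem_erase, Finset.mem_image]
    constructor
    · rintro (rfl | ⟨hxj, y, hy, rfl⟩)
      · exact ⟨j, hjS, hg1j⟩
      · have h3 : y ≠ j := fun hh => hxj (by rw [hh, hgj])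
        have h4 : y ≠ n := fun hh => hnS (hh ▸ hy)
        exact ⟨y, hy, hagree y h3 h4⟩
    · rintro ⟨y, hy, rfl⟩
      by_cases h3 : y = j
      · left; rw [h3, hg1j]
      · have h4 : y ≠ n := fun hh => hnS (hh ▸ hy)
        rw [hagree y h3 h4]
        right
        refine ⟨fun hh => h3 (heqj y hy hh), y, hy, rfl⟩
  · -- n ∈ S, j ∉ S : move j+1 down
    have h1 : ¬(j ∈ S.image (g n t) ∧ j + 1 ∉ S.image (g n t)) := by
      intro hh; exact hh.2 (hmemj1.mpr hnS)
    have h2 : j + 1 ∈ S.image (g n t) ∧ j ∉ S.image (g n t) :=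
      ⟨hmemj1.mpr hnS, fun hh => hjS (hmemj.mp hh)⟩
    rw [sstep, if_neg h1, if_pos h2]
    ext x
    simp only [Finset.mem_insert, Finset.mem_erase, Finset.mem_image]
    constructor
    · rintro (rfl | ⟨hxj, y, hy, rfl⟩)
      · exact ⟨n, hnS, hg1n⟩
      · have h4 : y ≠ n := fun hh => hxj (by rw [hh, hgn])
        have h3 : y ≠ j := fun hh => hjS (hh ▸ hy)
        exact ⟨y, hy, hagree y h3 h4⟩
    · rintro ⟨y, hy, rfl⟩
      by_cases h4 : y = n
      · left; rw [h4, hg1n]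
      · have h3 : y ≠ j := fun hh => hjS (hh ▸ hy)
        rw [hagree y h3 h4]
        right
        refine ⟨fun hh => h4 (heqj1 y hy hh), y, hy, rfl⟩
  · -- neither
    have h1 : ¬(j ∈ S.image (g n t) ∧ j + 1 ∉ S.image (g n t)) := by
      intro hh; exact hjS (hmemj.mp hh.1)
    have h2 : ¬(j + 1 ∈ S.image (g n t) ∧ j ∉ S.image (g n t)) := by
      intro hh; exact hnS (hmemj1.mp hh.1)
    rw [sstep, if_neg h1, if_neg h2]
    apply Finset.image_congr
    intro y hy
    have h3 : y ≠ j := fun hh => hjS (hh ▸ hy)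
    have h4 : y ≠ n := fun hh => hnS (hh ▸ hy)
    exact (hagree y h3 h4).symm

lemma foldr_bk (k n : ℕ) {S : Finset ℕ} (hS : S ⊆ Finset.Icc 1 n) (h : S.card = k) :
    ∀ t, t ≤ n - 1 →
      ((List.range t).map (· + (n - t))).foldr (fun i acc => bk k 1 i acc) (tabOf k 1 S)
        = tabOf k 1 (S.image (g n t)) := by
  intro t
  induction t with
  | zero =>
    intro _
    simp only [List.range_zero, List.map_nil, List.foldr_nil]
    rw [show S.image (g n 0) = S.image id from Finset.image_congr (by
      intro y hy
      have := Finset.mem_Icc.mp (hS hy)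
      unfold g; simp only [id]; split_ifs <;> omega), Finset.image_id]
  | succ t ih =>
    intro ht
    have hlist : (List.range (t + 1)).map (· + (n - (t + 1)))
        = (n - (t + 1)) :: (List.range t).map (· + (n - t)) := by
      rw [List.range_succ_eq_map, List.map_cons, List.map_map]
      congr 1
      · omega
      · apply List.map_congr_left
        intro x _
        simp only [Function.comp_apply, Nat.succ_eq_add_one]
        omega
    rw [hlist, List.foldr_cons, ih (by omega),
      bk_tabOf (by omega) (card_image_g hS h), sstep_image (by omega) hS]

lemma promoN_tabOf {k n : ℕ} (hn : 0 < n) {S : Finset ℕ} (hS : S ⊆ Finset.Icc 1 n)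
    (h : S.card = k) :
    promoN k 1 n (tabOf k 1 S) = tabOf k 1 (shiftSet n S) := by
  have h1 := foldr_bk k n hS h (n - 1) le_rfl
  have h2 : S.image (g n (n - 1)) = shiftSet n S := by
    rw [shiftSet]
    apply Finset.image_congr
    intro y hy
    show g n (n - 1) y = y % n + 1
    have hb := Finset.mem_Icc.mp (hS hy)
    unfold g
    by_cases hyn : y = n
    · subst hyn
      rw [if_neg (by omega), if_pos rfl, Nat.mod_self]
      omega
    · rw [if_neg (by omega), if_neg hyn, Nat.mod_eq_of_lt (by omega)]
  have hl : n - (n - 1) = 1 := by omega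
  rw [hl] at h1
  unfold promoN promo
  rw [h1, h2]
  funext r c
  unfold normTab tabOf
  split_ifs <;> rfl


lemma mod_inj {n a b : ℕ} (ha1 : 1 ≤ a) (ha2 : a ≤ n) (hb1 : 1 ≤ b) (hb2 : b ≤ n)
    (h : a % n = b % n) : a = b := by
  by_cases h1 : a = n <;> by_cases h2 : b = n
  · omega
  · subst h1; rw [Nat.mod_self, Nat.mod_eq_of_lt (by omega)] at h; omega
  · subst h2; rw [Nat.mod_self, Nat.mod_eq_of_lt (by omega)] at h; omega
  · rw [Nat.mod_eq_of_lt (by omega), Nat.mod_eq_of_lt (by omega)] at h; omega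

lemma shiftSet_K {k n : ℕ} (hn : 0 < n) {S : Finset ℕ} (hS : S ⊆ Finset.Icc 1 n)
    (h : S.card = k) : shiftSet n S ⊆ Finset.Icc 1 n ∧ (shiftSet n S).card = k := by
  constructor
  · intro x hx
    rw [shiftSet, Finset.mem_image] at hx
    obtain ⟨y, _, rfl⟩ := hx
    rw [Finset.mem_Icc]
    have := Nat.mod_lt y hn
    omega
  · rw [shiftSet, Finset.card_image_of_injOn, h]
    intro a ha b hb hab
    have ha' := Finset.mem_Icc.mp (hS ha)
    have hb' := Finset.mem_Icc.mp (hS hb)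
    have hab' : a % n + 1 = b % n + 1 := hab
    exact mod_inj ha'.1 ha'.2 hb'.1 hb'.2 (by omega)

lemma shiftSet_iter_K {k n : ℕ} (hn : 0 < n) (m : ℕ) {S : Finset ℕ}
    (hS : S ⊆ Finset.Icc 1 n) (h : S.card = k) :
    (shiftSet n)^[m] S ⊆ Finset.Icc 1 n ∧ ((shiftSet n)^[m] S).card = k := by
  induction m with
  | zero => exact ⟨hS, h⟩
  | succ m ih =>
    rw [Function.iterate_succ_apply']
    exact shiftSet_K hn ih.1 ih.2

lemma image_tabOf {k : ℕ} {S : Finset ℕ} (h : S.card = k) :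
    ((Finset.range k).image fun r => tabOf k 1 S r 0) = S := by
  ext x
  simp only [Finset.mem_image, Finset.mem_range]
  constructor
  · rintro ⟨r, hr, rfl⟩
    rw [tabOf_eval, if_pos ⟨hr, rfl⟩]
    exact col_mem h hr
  · intro hx
    obtain ⟨r, hr, hc⟩ := col_exists h hx
    exact ⟨r, hr, by rw [tabOf_eval, if_pos ⟨hr, rfl⟩]; exact hc⟩

lemma tabOf_mem_BIset {k n : ℕ} {I J : Finset ℕ} (hJ : J ∈ SchubMatroid k n I) :
    tabOf k 1 J ∈ BIset k 1 n I := by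
  obtain ⟨hsub, hcard, hgale⟩ := hJ
  refine ⟨⟨?_, ?_, ?_⟩, ?_, ?_⟩
  · intro r c hr hc
    have hc0 : c = 0 := by omega
    subst hc0
    rw [tabOf_eval, if_pos ⟨hr, rfl⟩]
    exact Finset.mem_Icc.mp (hsub (col_mem hcard hr))
  · intro r c _ hc; omega
  · intro r c hr hc
    have hc0 : c = 0 := by omega
    subst hc0
    rw [tabOf_eval, tabOf_eval, if_pos ⟨by omega, rfl⟩, if_pos ⟨hr, rfl⟩]
    exact col_lt_col hcard (by omega) hr
  · intro r c hr hc
    have hc0 : c = 0 := by omega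
    subst hc0
    rw [tabOf_eval, tabOf_eval, if_pos ⟨hr, rfl⟩, if_pos ⟨hr, rfl⟩]
    exact hgale r hr
  · intro r c hrc
    rw [tabOf_eval, if_neg (by omega)]

lemma BIset_eq (k n : ℕ) (I : Finset ℕ) :
    BIset k 1 n I = tabOf k 1 '' SchubMatroid k n I := by
  apply Set.Subset.antisymm
  · rintro T ⟨hssyt, hge, hzero⟩
    set J := (Finset.range k).image fun r => T r 0 with hJ
    have hmono : ∀ d r, r + d + 1 < k → T r 0 < T (r + d + 1) 0 := by
      intro d
      induction d with
      | zero => intro r hr; exact hssyt.2.2 r 0 (by omega) (by omega)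
      | succ d ih =>
        intro r hr
        calc T r 0 < T (r + d + 1) 0 := ih r (by omega)
          _ < T (r + d + 1 + 1) 0 := hssyt.2.2 _ 0 (by omega) (by omega)
        -- note r + (d+1) + 1 = r + d + 1 + 1
    have hmono' : ∀ r r', r < r' → r' < k → T r 0 < T r' 0 := by
      intro r r' hrr hr'
      have := hmono (r' - r - 1) r (by omega)
      have he : r + (r' - r - 1) + 1 = r' := by omega
      rwa [he] at this
    have hcard : J.card = k := by
      rw [hJ, Finset.card_image_of_injOn, Finset.card_range]
      intro a ha b hb hab
      rw [Finset.mem_coe, Finset.mem_range] at ha hb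
      have hab' : T a 0 = T b 0 := hab
      rcases lt_trichotomy a b with h' | h' | h'
      · have := hmono' a b h' hb; omega
      · exact h'
      · have := hmono' b a h' ha; omega
    have hsort : J.sort (· ≤ ·) = (List.range k).map (fun r => T r 0) := by
      apply sort_unique
      · rw [List.pairwise_map]
        refine List.Pairwise.imp_of_mem ?_ (List.pairwise_lt_range (n := k))
        intro a b ha hb hab
        rw [List.mem_range] at ha hb
        exact hmono' a b hab hb
      · ext x
        simp only [List.mem_toFinset, List.mem_map, List.mem_range, hJ, Finset.mem_image,
          Finset.mem_range]
    have hcol : ∀ r, r < k → col J r = T r 0 := by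
      intro r hr
      rw [col, hsort, List.getD_eq_getElem _ _ (by simpa using hr)]
      simp
    have hTJ : T = tabOf k 1 J := by
      funext r c
      rw [tabOf_eval]
      by_cases hrc : r < k ∧ c = 0
      · obtain ⟨hr, hc⟩ := hrc
        subst hc
        rw [if_pos ⟨hr, rfl⟩, hcol r hr]
      · rw [if_neg hrc]
        exact hzero r c (by omega)
    refine ⟨J, ⟨?_, hcard, ?_⟩, hTJ.symm⟩
    · intro x hx
      rw [hJ, Finset.mem_image] at hx
      obtain ⟨r, hr, rfl⟩ := hx
      rw [Finset.mem_range] at hr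
      exact Finset.mem_Icc.mpr (hssyt.1 r 0 hr (by omega))
    · intro r hr
      have h1 : (I.sort (· ≤ ·)).getD r 0 = tabOf k 1 I r 0 := by
        rw [tabOf_eval, if_pos ⟨hr, rfl⟩]; rfl
      have h2 : (J.sort (· ≤ ·)).getD r 0 = T r 0 := hcol r hr
      rw [h1, h2]
      exact hge r 0 hr (by omega)
  · rintro T ⟨J, hJ, rfl⟩
    exact tabOf_mem_BIset hJ

lemma promoN_iter {k n : ℕ} (hn : 0 < n) (m : ℕ) {S : Finset ℕ}
    (hS : S ⊆ Finset.Icc 1 n) (h : S.card = k) :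
    (promoN k 1 n)^[m] (tabOf k 1 S) = tabOf k 1 ((shiftSet n)^[m] S) := by
  induction m with
  | zero => rfl
  | succ m ih =>
    obtain ⟨h1, h2⟩ := shiftSet_iter_K hn m hS h
    rw [Function.iterate_succ_apply' (shiftSet n) m S,
      Function.iterate_succ_apply' (promoN k 1 n) m (tabOf k 1 S), ih,
      promoN_tabOf hn h1 h2]

end Stmt11Aux

/-- For `d = 1`, identifying a one-column tableau of shape `1^k` with the `k`-subset of
its entries, the cyclic Demazure crystal `B_f(ω_k)` equals the positroid `M(f)`. -/
theorem stmt_11 (k n : ℕ) (hn : 0 < n) (f : ℤ → ℤ) (hf : IsBAP k n f) :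
    (fun T : ℕ → ℕ → ℕ => (Finset.range k).image fun r => T r 0) ''
      cyclicDemazure k 1 n f = posOf k n f := by
  classical
  have key : ∀ (m : ℕ) (I : Finset ℕ),
      (promoN k 1 n)^[m] '' BIset k 1 n I
        = tabOf k 1 '' ((shiftSet n)^[m] '' SchubMatroid k n I) := by
    intro m I
    rw [Stmt11Aux.BIset_eq, Set.image_image, Set.image_image]
    apply Set.image_congr
    intro J hJ
    exact Stmt11Aux.promoN_iter hn m hJ.1 hJ.2.1
  have hCD : cyclicDemazure k 1 n f
      = ⋂ a ∈ Finset.Icc 1 n, tabOf k 1 ''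
          ((shiftSet n)^[a - 1] ''
            SchubMatroid k n ((shiftSet n)^[n + 1 - a] (necklaceOf n f a))) := by
    unfold cyclicDemazure
    exact Set.iInter₂_congr fun a ha => key _ _
  rw [hCD]
  unfold posOf
  ext J
  simp only [Set.mem_image]
  constructor
  · rintro ⟨T, hT, rfl⟩
    rw [Set.mem_iInter₂] at hT
    rw [Set.mem_iInter₂]
    intro a ha
    obtain ⟨Ja, hJa, hTa⟩ := hT a ha
    have hKa : Ja ⊆ Finset.Icc 1 n ∧ Ja.card = k := by
      obtain ⟨J', hJ', rfl⟩ := hJa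
      exact Stmt11Aux.shiftSet_iter_K hn _ hJ'.1 hJ'.2.1
    show ((Finset.range k).image fun r => T r 0) ∈ _
    rw [← hTa, Stmt11Aux.image_tabOf hKa.2]
    exact hJa
  · intro hJ
    rw [Set.mem_iInter₂] at hJ
    have h1 : (1 : ℕ) ∈ Finset.Icc 1 n := by rw [Finset.mem_Icc]; omega
    have hK : J ⊆ Finset.Icc 1 n ∧ J.card = k := by
      obtain ⟨J', hJ', hJe⟩ := hJ 1 h1
      simp only [Nat.sub_self, Function.iterate_zero_apply] at hJe
      subst hJe
      exact ⟨hJ'.1, hJ'.2.1⟩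
    refine ⟨tabOf k 1 J, ?_, ?_⟩
    · rw [Set.mem_iInter₂]
      intro a ha
      exact ⟨J, hJ a ha, rfl⟩
    · show ((Finset.range k).image fun r => tabOf k 1 J r 0) = J
      exact Stmt11Aux.image_tabOf hK.2
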